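/- Let (S,d) be a nonempty separable metric space and let ν be a Borel probability measure on S. Let δ > 0 and p ∈ (0,1] be such that ν(B(z,δ)) ≥ p for every z ∈ S. Let (z_i)_{i≥1} be an i.i.d. sequence of S-valued random variables, each with distribution ν, defined on a probability space (Ω,ℱ,ℙ). Then for every N ∈ ℕ, ℙ[ there exists z ∈ S with d(z,z_i) > 2δ for all 1 ≤ i ≤ N ] ≤ p^{-1}(1−p)^N. Equivalently, with probability at least 1 − p^{-1}(1−p)^N, the closed balls of radius 2δ centered at z₁,…,z_N cover S. -/

import Mathlib

open MeasureTheory ProbabilityTheory in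
theorem iid_net_covering {S : Type*} [MetricSpace S] [Nonempty S]
    [TopologicalSpace.SeparableSpace S] [MeasurableSpace S] [BorelSpace S]
    {Ω : Type*} [MeasurableSpace Ω] (P : MeasureTheory.Measure Ω)
    [MeasureTheory.IsProbabilityMeasure P]
    (ν : MeasureTheory.Measure S) [MeasureTheory.IsProbabilityMeasure ν]
    (δ p : ℝ) (hδ : 0 < δ) (hp0 : 0 < p) (hp1 : p ≤ 1)
    (hball : ∀ z : S, ENNReal.ofReal p ≤ ν (Metric.ball z δ))
    (z : ℕ → Ω → S) (hmeas : ∀ i, Measurable (z i))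
    (hindep : ProbabilityTheory.iIndepFun z P)
    (hdist : ∀ i, MeasureTheory.Measure.map (z i) P = ν)
    (N : ℕ) :
    P {ω | ∃ zp : S, ∀ i ∈ Finset.Icc 1 N, 2 * δ < dist zp (z i ω)}
      ≤ ENNReal.ofReal (p⁻¹ * (1 - p) ^ N) := by
  classical
  haveI : SecondCountableTopology S :=
    UniformSpace.secondCountable_of_separable S
  set ι : Finset ℕ := Finset.Icc 1 N with hι
  set Y : Ω → (ι → S) := fun ω i => z i ω with hYdef
  have hYmeas : Measurable Y := measurable_pi_lambda _ fun i => hmeas i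
  set μ : Measure (ι → S) := P.map Y with hμdef
  haveI : IsProbabilityMeasure μ := Measure.isProbabilityMeasure_map hYmeas.aemeasurable
  -- independence of z 0 from the tuple Y
  have hXY : IndepFun (z 0) Y P := by
    have hd : Disjoint ({0} : Finset ℕ) ι := by
      simp only [Finset.disjoint_left, Finset.mem_singleton]
      rintro x rfl hx
      simp [hι, Finset.mem_Icc] at hx
    have h := hindep.indepFun_finset {0} ι hd hmeas
    exact h.comp (measurable_pi_apply (⟨0, Finset.mem_singleton_self 0⟩ : ({0} : Finset ℕ)))
      measurable_id
  have hprodmap : P.map (fun ω => (z 0 ω, Y ω)) = ν.prod μ := by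
    rw [← hdist 0, hμdef]
    exact (indepFun_iff_map_prod_eq_prod_map_map (hmeas 0).aemeasurable hYmeas.aemeasurable).mp hXY
  -- the sets
  set A : Set (S × (ι → S)) := {q | ∀ i : ι, δ < dist q.1 (q.2 i)} with hA
  have hAopen : IsOpen A := by
    have : A = ⋂ i : ι, {q : S × (ι → S) | δ < dist q.1 (q.2 i)} := by
      ext q; simp [hA, Set.mem_iInter]
    rw [this]
    exact isOpen_iInter_of_finite fun i =>
      isOpen_lt continuous_const (continuous_fst.dist ((continuous_apply i).comp continuous_snd))
  have hAmeas : MeasurableSet A := hAopen.measurableSet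
  set E : Set (ι → S) := {v | ∃ zp : S, ∀ i : ι, 2 * δ < dist zp (v i)} with hE
  have hEmeas : MeasurableSet E := by
    have : E = ⋃ zp : S, ⋂ i : ι, {v : ι → S | 2 * δ < dist zp (v i)} := by
      ext v; simp [hE]
    rw [this]
    exact (isOpen_iUnion fun zp => isOpen_iInter_of_finite fun i =>
      isOpen_lt continuous_const (Continuous.dist continuous_const (continuous_apply i))).measurableSet
  have htarget : {ω | ∃ zp : S, ∀ i ∈ Finset.Icc 1 N, 2 * δ < dist zp (z i ω)} = Y ⁻¹' E := by
    ext ω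
    simp only [Set.mem_setOf_eq, Set.mem_preimage, hE, hYdef]
    constructor
    · rintro ⟨zp, h⟩; exact ⟨zp, fun i => h i i.2⟩
    · rintro ⟨zp, h⟩; exact ⟨zp, fun i hi => h ⟨i, hi⟩⟩
  -- lower bound
  have hμE : μ E = P (Y ⁻¹' E) := Measure.map_apply hYmeas hEmeas
  have key1 : ENNReal.ofReal p * P (Y ⁻¹' E) ≤ (ν.prod μ) A := by
    rw [Measure.prod_apply_symm hAmeas]
    calc ENNReal.ofReal p * P (Y ⁻¹' E) = ∫⁻ _ in E, ENNReal.ofReal p ∂μ := by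
          rw [setLIntegral_const, hμE, mul_comm]
      _ ≤ ∫⁻ v in E, ν ((fun x => (x, v)) ⁻¹' A) ∂μ := by
          refine setLIntegral_mono' hEmeas fun v hv => ?_
          obtain ⟨zp, hzp⟩ := hv
          refine le_trans (hball zp) (measure_mono ?_)
          intro y hy
          have hdy : dist zp y < δ := by
            simpa [Metric.mem_ball, dist_comm] using hy
          intro i
          have h1 := hzp i
          have h2 := dist_triangle zp y (v i)
          simp only [Set.mem_setOf_eq]
          linarith
      _ ≤ ∫⁻ v, ν ((fun x => (x, v)) ⁻¹' A) ∂μ := setLIntegral_le_lintegral _ _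
  -- upper bound
  have key2 : (ν.prod μ) A ≤ (1 - ENNReal.ofReal p) ^ N := by
    rw [Measure.prod_apply hAmeas]
    calc ∫⁻ y, μ (Prod.mk y ⁻¹' A) ∂ν ≤ ∫⁻ _, (1 - ENNReal.ofReal p) ^ N ∂ν := by
          refine lintegral_mono fun y => ?_
          have hsub : Prod.mk y ⁻¹' A ⊆
              ⋂ i : ι, (fun v : ι → S => v i) ⁻¹' (Metric.ball y δ)ᶜ := by
            intro v hv
            simp only [Set.mem_iInter, Set.mem_preimage, Set.mem_compl_iff, Metric.mem_ball]
            intro i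
            have := hv i
            rw [dist_comm]
            push_neg
            linarith
          refine le_trans (measure_mono hsub) ?_
          have hbox : μ (⋂ i : ι, (fun v : ι → S => v i) ⁻¹' (Metric.ball y δ)ᶜ)
              = P (⋂ i ∈ ι, z i ⁻¹' (Metric.ball y δ)ᶜ) := by
            rw [Measure.map_apply hYmeas
              (MeasurableSet.iInter fun i => (measurable_pi_apply i) measurableSet_ball.compl)]
            congr 1
            ext ω
            simp [Set.mem_iInter, hYdef]
          rw [hbox, hindep.measure_inter_preimage_eq_mul ι
            (sets := fun _ => (Metric.ball y δ)ᶜ) (fun i _ => measurableSet_ball.compl)]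
          calc ∏ i ∈ ι, P (z i ⁻¹' (Metric.ball y δ)ᶜ)
              ≤ ∏ _i ∈ ι, (1 - ENNReal.ofReal p) := by
                refine Finset.prod_le_prod' fun i _ => ?_
                have hPi : P (z i ⁻¹' (Metric.ball y δ)ᶜ) = ν (Metric.ball y δ)ᶜ := by
                  rw [← hdist i, Measure.map_apply (hmeas i) measurableSet_ball.compl]
                rw [hPi, measure_compl Metric.isOpen_ball.measurableSet (measure_ne_top _ _),
                  measure_univ]
                exact tsub_le_tsub_left (hball y) 1
            _ = (1 - ENNReal.ofReal p) ^ N := by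
                rw [Finset.prod_const, hι]
                simp [Nat.card_Icc]
      _ = (1 - ENNReal.ofReal p) ^ N := by simp
  -- combine
  have hkey := le_trans key1 key2
  rw [htarget]
  have hp' : ENNReal.ofReal p ≠ 0 := by
    simp only [ne_eq, ENNReal.ofReal_eq_zero, not_le]; exact hp0
  rw [ENNReal.ofReal_mul (by positivity : (0:ℝ) ≤ p⁻¹),
    ENNReal.ofReal_pow (by linarith : (0:ℝ) ≤ 1 - p), ENNReal.ofReal_inv_of_pos hp0]
  have h1p : ENNReal.ofReal (1 - p) = 1 - ENNReal.ofReal p := by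
    rw [ENNReal.ofReal_sub _ (le_of_lt hp0), ENNReal.ofReal_one]
  rw [h1p, ← ENNReal.div_eq_inv_mul]
  exact (ENNReal.le_div_iff_mul_le (Or.inl hp') (Or.inl ENNReal.ofReal_ne_top)).mpr
    (by rwa [mul_comm])
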